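/- The polynomial α_3(s) = (15/8)s³ − (25/8)s² + (13/8)s − 3/8 factors as α_3(s) = (1/8)(s − 1)(15s² − 10s + 3), and every complex root z of 15s² − 10s + 3 satisfies |z|² = 1/5, hence |z| < 1. Consequently, 1 is a simple root of α_3 and all other roots lie strictly inside the unit circle, so the 3-step LIL method satisfies the Dahlquist root condition (zero-stability). -/

import Mathlib

open Polynomial

/-- First characteristic polynomial of the 3-step LIL method, over `ℂ`. -/
noncomputable def lilAlpha3 : Polynomial ℂ :=
  C (15 / 8) * X ^ 3 - C (25 / 8) * X ^ 2 + C (13 / 8) * X - C (3 / 8)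

lemma lil_quad_root (z : ℂ) (h : 15 * z ^ 2 - 10 * z + 3 = 0) :
    ‖z‖ ^ 2 = 1 / 5 ∧ ‖z‖ < 1 := by
  have hre := congrArg Complex.re h
  have him := congrArg Complex.im h
  simp [pow_two, Complex.mul_re, Complex.mul_im, Complex.add_re, Complex.add_im,
    Complex.sub_re, Complex.sub_im] at hre him
  set x := z.re
  set y := z.im
  have hnorm : x ^ 2 + y ^ 2 = 1 / 5 := by
    rcases mul_eq_zero.mp (show y * (30 * x - 10) = 0 by ring_nf; ring_nf at him; linarith) with hy | hx
    · exfalso; nlinarith [sq_nonneg (x - 1/3)]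
    · have hx3 : x = 1 / 3 := by linarith
      nlinarith [hx3, hre]
  have habs : ‖z‖ ^ 2 = 1 / 5 := by
    rw [Complex.sq_norm, Complex.normSq_apply]
    simpa [pow_two] using hnorm
  refine ⟨habs, ?_⟩
  nlinarith [norm_nonneg z]

/-- `α₃(s)` factors as `(1/8)(s − 1)(15s² − 10s + 3)`, every complex root `z` of
`15s² − 10s + 3` satisfies `|z|² = 1/5` (hence `|z| < 1`), `1` is a simple root of
`α₃`, and all other roots lie strictly inside the unit circle: the 3-step LIL
method satisfies the Dahlquist root condition (zero-stability). -/
theorem lil_root_condition_m3 :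
    lilAlpha3 = C (1 / 8) * (X - C 1) * (C 15 * X ^ 2 - C 10 * X + C 3) ∧
    (∀ z : ℂ, 15 * z ^ 2 - 10 * z + 3 = 0 →
      ‖z‖ ^ 2 = 1 / 5 ∧ ‖z‖ < 1) ∧
    lilAlpha3.rootMultiplicity 1 = 1 ∧
    (∀ z : ℂ, lilAlpha3.eval z = 0 → z ≠ 1 → ‖z‖ < 1) := by
  have hfac : lilAlpha3 = C (1 / 8) * (X - C 1) * (C 15 * X ^ 2 - C 10 * X + C 3) := by
    apply Polynomial.funext
    intro x
    simp [lilAlpha3]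
    ring
  refine ⟨hfac, fun z h => lil_quad_root z h, ?_, ?_⟩
  · have hq : lilAlpha3 = (X - C 1) * (C (1/8) * (C 15 * X ^ 2 - C 10 * X + C 3)) := by
      rw [hfac]; ring
    rw [hq]
    have hne : ((X - C 1) * (C (1/8) * (C 15 * X ^ 2 - C 10 * X + C 3)) : Polynomial ℂ) ≠ 0 := by
      rw [← hq]
      intro h0
      have := congrArg (eval 0) h0
      simp [lilAlpha3] at this
    rw [Polynomial.rootMultiplicity_mul hne, Polynomial.rootMultiplicity_X_sub_C_self]
    have : Polynomial.rootMultiplicity 1 (C (1/8 : ℂ) * (C 15 * X ^ 2 - C 10 * X + C 3)) = 0 := by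
      rw [Polynomial.rootMultiplicity_eq_zero_iff]
      intro hroot
      exfalso
      simp [Polynomial.IsRoot, eval_mul] at hroot
      norm_num at hroot
    omega
  · intro z hz hz1
    have : (1/8 : ℂ) * (z - 1) * (15 * z ^ 2 - 10 * z + 3) = 0 := by
      have := hz
      rw [hfac] at this
      simpa using this
    have hq : 15 * z ^ 2 - 10 * z + 3 = 0 := by
      rcases mul_eq_zero.mp this with h1 | h2
      · rcases mul_eq_zero.mp h1 with h3 | h4
        · norm_num at h3
        · exact absurd (sub_eq_zero.mp h4) hz1
      · exact h2
    exact (lil_quad_root z hq).2
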